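/- For every integer d ≥ 1, every centrally symmetric triangulation of a convex polygon with 2d+2 vertices contains exactly one diagonal, i.e. exactly one edge of the form {x, x̄}. -/
import Mathlib


namespace Cyclo

/-! Centrally symmetric triangulations of a convex polygon with `n` vertices,
labelled clockwise by `ZMod n`. -/

/-- The vertex opposite to `x` of the polygon with `n` vertices. -/
def opp (n : ℕ) (x : ZMod n) : ZMod n := x + ((n / 2 : ℕ) : ZMod n)

/-- `e` is an edge on the polygon: a set of two distinct vertices. -/
def IsEdge (n : ℕ) (e : Finset (ZMod n)) : Prop :=
  ∃ x y : ZMod n, x ≠ y ∧ e = {x, y}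

/-- `e` is a boundary edge of the polygon. -/
def IsBoundaryEdge (n : ℕ) (e : Finset (ZMod n)) : Prop :=
  ∃ x : ZMod n, e = {x, x + 1}

/-- `y` lies strictly between `x` and `z` in the clockwise cyclic order. -/
def Sbtw (n : ℕ) (x y z : ZMod n) : Prop :=
  0 < (y - x).val ∧ (y - x).val < (z - x).val

/-- Two edges cross: exactly one endpoint of one lies strictly between the
endpoints of the other in the clockwise cyclic order. -/
def Crosses (n : ℕ) (e f : Finset (ZMod n)) : Prop :=
  ∃ a b c d : ZMod n, e = {a, b} ∧ f = {c, d} ∧ Sbtw n a c b ∧ Sbtw n b d a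

/-- A triangulation: a maximal set of pairwise non-crossing edges. -/
def IsTriangulation (n : ℕ) (T : Set (Finset (ZMod n))) : Prop :=
  (∀ e ∈ T, IsEdge n e) ∧
  (∀ e ∈ T, ∀ f ∈ T, ¬ Crosses n e f) ∧
  (∀ e, IsEdge n e → (∀ f ∈ T, ¬ Crosses n e f ∧ ¬ Crosses n f e) → e ∈ T)

/-- `T` is centrally symmetric. -/
def IsCS (n : ℕ) (T : Set (Finset (ZMod n))) : Prop :=
  ∀ x y : ZMod n, ({x, y} : Finset (ZMod n)) ∈ T →
    ({opp n x, opp n y} : Finset (ZMod n)) ∈ T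

/-- `T` is a centrally symmetric triangulation. -/
def IsCST (n : ℕ) (T : Set (Finset (ZMod n))) : Prop :=
  IsTriangulation n T ∧ IsCS n T

/-- `T'` is obtained from `T` by flipping the interior edge `{x,x'}` (and its
centrally symmetric copy `{x̄,x̄'}`): the four boundary edges of the quadrilateral
with diagonal `{x,x'}` belong to `T`, and `{x,x'}`, `{x̄,x̄'}` are replaced by the
opposite diagonals `{y,y'}`, `{ȳ,ȳ'}`. -/
def IsFlip (n : ℕ) (T T' : Set (Finset (ZMod n))) : Prop :=
  IsCST n T ∧ IsCST n T' ∧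
  ∃ x x' y y' : ZMod n,
    ¬ IsBoundaryEdge n {x, x'} ∧
    ({x, x'} : Finset (ZMod n)) ∈ T ∧ ({x, y} : Finset (ZMod n)) ∈ T ∧
    ({y, x'} : Finset (ZMod n)) ∈ T ∧ ({x', y'} : Finset (ZMod n)) ∈ T ∧
    ({y', x} : Finset (ZMod n)) ∈ T ∧
    T' = (T \ {({x, x'} : Finset (ZMod n)), {opp n x, opp n x'}}) ∪
         {({y, y'} : Finset (ZMod n)), {opp n y, opp n y'}}

/-- The flip graph (on all sets of edges; non-triangulations are isolated vertices). -/
def flipGraph (n : ℕ) : SimpleGraph (Set (Finset (ZMod n))) :=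
  SimpleGraph.fromRel (IsFlip n)

/-- The flip distance of two centrally symmetric triangulations. -/
noncomputable def delta (n : ℕ) (T T' : Set (Finset (ZMod n))) : ℕ := (flipGraph n).dist T T'

/-- The flip graph on the centrally symmetric triangulations of the `n`-gon;
it is isomorphic to the graph of the `(n/2 - 1)`-dimensional cyclohedron. -/
def flipGraphCS (n : ℕ) : SimpleGraph {T : Set (Finset (ZMod n)) // IsCST n T} :=
  SimpleGraph.fromRel fun T T' => IsFlip n T.1 T'.1

/-- `g 0, …, g k` is a geodesic from `Tm` to `Tp`. -/
def IsGeodesic (n : ℕ) (Tm Tp : Set (Finset (ZMod n)))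
    (g : ℕ → Set (Finset (ZMod n))) (k : ℕ) : Prop :=
  g 0 = Tm ∧ g k = Tp ∧ (∀ i < k, (flipGraph n).Adj (g i) (g (i + 1))) ∧
    k = delta n Tm Tp

/-- The flip transforming `T` into `T'` is incident to the boundary edge `{p,q}`:
it removes `{p,r}` or `{q,r}`, where `r` is the apex of the triangle of `T` on `{p,q}`. -/
def FlipIncident (n : ℕ) (T T' : Set (Finset (ZMod n))) (p q : ZMod n) : Prop :=
  ∃ r : ZMod n, ({p, r} : Finset (ZMod n)) ∈ T ∧ ({q, r} : Finset (ZMod n)) ∈ T ∧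
    (({p, r} : Finset (ZMod n)) ∉ T' ∨ ({q, r} : Finset (ZMod n)) ∉ T')

/-- The number of flips along the path `g 0, …, g k` incident to `{p,q}`. -/
noncomputable def incidentCount (n : ℕ) (g : ℕ → Set (Finset (ZMod n))) (k : ℕ) (p q : ZMod n) : ℕ :=
  Nat.card {i : Fin k // FlipIncident n (g i.1) (g (i.1 + 1)) p q}

/-- `x`, `y`, `z` are the vertices of a triangle of `T`. -/
def IsTriangleOf (n : ℕ) (T : Set (Finset (ZMod n))) (x y z : ZMod n) : Prop :=
  ({x, y} : Finset (ZMod n)) ∈ T ∧ ({y, z} : Finset (ZMod n)) ∈ T ∧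
    ({x, z} : Finset (ZMod n)) ∈ T

/-- The three edges of the triangle with vertices `x`, `y`, `z`. -/
def triEdges (n : ℕ) (x y z : ZMod n) : Set (Finset (ZMod n)) :=
  {{x, y}, {y, z}, {x, z}}

/-- Relabelling map for the deletion of vertex `p` from the polygon with `2e+2`
vertices: `p` is replaced by `q = p+1`, `p̄` by `q̄`, and the remaining `2e`
vertices are relabelled clockwise by `ZMod (2e)` (with `q ↦ 0`), so that
opposite vertices again differ by `e`. -/
def delV (e : ℕ) (p x : ZMod (2 * e + 2)) : ZMod (2 * e) :=
  ((if (x - p).val ≤ e + 1 then (x - p).val - 1 else (x - p).val - 2 : ℕ) : ZMod (2 * e))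

/-- Deletion of vertex `p` from `T`: remove the edges `{p,p+1}` and `{p̄,p̄+1}`,
replace `p` by `p+1` and `p̄` by `p̄+1` in every other edge, and relabel. -/
def delT (e : ℕ) (p : ZMod (2 * e + 2)) (T : Set (Finset (ZMod (2 * e + 2)))) :
    Set (Finset (ZMod (2 * e))) :=
  (fun s => s.image (delV e p)) ''
    (T \ {({p, p + 1} : Finset (ZMod (2 * e + 2))),
          {opp (2 * e + 2) p, opp (2 * e + 2) p + 1}})

/-- `DelButOne h k Tm Tp p₀ Sm Sp` holds when the pair `(Sm, Sp)` is obtained from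
the pair `(Tm, Tp)` by successively deleting `k` of the `k+1` consecutive vertices
`p₀, p₀+1, …, p₀+k` (all but one of them), the deletions being performed in the
successively smaller polygons with the surviving vertices keeping their cyclic order. -/
def DelButOne : (h k : ℕ) → Set (Finset (ZMod (2 * (h + k) + 2))) →
    Set (Finset (ZMod (2 * (h + k) + 2))) → ZMod (2 * (h + k) + 2) →
    Set (Finset (ZMod (2 * h + 2))) → Set (Finset (ZMod (2 * h + 2))) → Prop
  | _, 0, Tm, Tp, _, Sm, Sp => Sm = Tm ∧ Sp = Tp
  | h, k + 1, Tm, Tp, p₀, Sm, Sp =>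
      ∃ j : ℕ, j ≤ k + 1 ∧
        DelButOne h k (delT (h + k + 1) (p₀ + (j : ZMod (2 * (h + (k + 1)) + 2))) Tm)
          (delT (h + k + 1) (p₀ + (j : ZMod (2 * (h + (k + 1)) + 2))) Tp)
          (delV (h + k + 1) (p₀ + (j : ZMod (2 * (h + (k + 1)) + 2))) p₀) Sm Sp

/-- The set of boundary edges of the polygon with `n` vertices. -/
def boundarySet (n : ℕ) : Set (Finset (ZMod n)) := {e | IsBoundaryEdge n e}

/-- Closure of a set of edges under the central symmetry. -/
def symCl (n : ℕ) (S : Set (Finset (ZMod n))) : Set (Finset (ZMod n)) :=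
  S ∪ (fun e => e.image (opp n)) '' S


/-- The interior edges (up to central symmetry) of the triangulation `A⁻`. -/
def AminusInterior (b c d : ℕ) : Set (Finset (ZMod (2 * d + 2))) :=
  {({(0 : ZMod (2 * d + 2)), opp (2 * d + 2) 0} : Finset (ZMod (2 * d + 2)))} ∪
  {e | ∃ x : ℕ, c ≤ x ∧ x ≤ d ∧
    e = ({(0 : ZMod (2 * d + 2)), (x : ZMod (2 * d + 2))} : Finset (ZMod (2 * d + 2)))} ∪
  {e | ∃ x : ℕ, b ≤ x ∧ x ≤ c ∧
    e = ({(1 : ZMod (2 * d + 2)), (x : ZMod (2 * d + 2))} : Finset (ZMod (2 * d + 2)))} ∪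
  {e | ∃ i : ℕ, 2 ≤ i ∧ i ≤ (b - 1) / 2 ∧
    e = ({(i : ZMod (2 * d + 2)), ((b + 1 - i : ℕ) : ZMod (2 * d + 2))} : Finset (ZMod (2 * d + 2)))} ∪
  {e | ∃ i : ℕ, 2 ≤ i ∧ i ≤ b / 2 ∧
    e = ({(i : ZMod (2 * d + 2)), ((b + 2 - i : ℕ) : ZMod (2 * d + 2))} : Finset (ZMod (2 * d + 2)))}

/-- The triangulation `A⁻` of the `(2d+2)`-gon: its edges are the boundary edges,
the interior edges listed in `AminusInterior`, and their centrally symmetric copies. -/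
def AminusSet (b c d : ℕ) : Set (Finset (ZMod (2 * d + 2))) :=
  boundarySet (2 * d + 2) ∪ symCl (2 * d + 2) (AminusInterior b c d)

/-- The edges that any triangulation `A⁺` of an `(a,b,c,d)`-pair must contain
(`l = a + b - d + 2`): the edges `{1,d̄}` and `{l,c̄}`, the centrally symmetric
zigzag crossing `{0,0̄}`, and the centrally symmetric copies of all of these. -/
def AplusCore (a b c d : ℕ) : Set (Finset (ZMod (2 * d + 2))) :=
  symCl (2 * d + 2)
    ({({(1 : ZMod (2 * d + 2)), opp (2 * d + 2) (d : ZMod (2 * d + 2))} : Finset (ZMod (2 * d + 2)))} ∪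
     {({((a + b - d + 2 : ℕ) : ZMod (2 * d + 2)),
        opp (2 * d + 2) (c : ZMod (2 * d + 2))} : Finset (ZMod (2 * d + 2)))} ∪
     {e | ∃ i : ℕ, a + b - d + 2 ≤ i ∧ i ≤ c ∧
       e = ({(i : ZMod (2 * d + 2)),
             opp (2 * d + 2) ((c + (a + b - d + 2) - i : ℕ) : ZMod (2 * d + 2))} : Finset (ZMod (2 * d + 2)))} ∪
     {e | ∃ i : ℕ, a + b - d + 2 ≤ i ∧ i ≤ c - 1 ∧
       e = ({(i : ZMod (2 * d + 2)),
             opp (2 * d + 2) ((c + (a + b - d + 2) - 1 - i : ℕ) : ZMod (2 * d + 2))} : Finset (ZMod (2 * d + 2)))})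

/-- `T` is an admissible triangulation `A⁺` for an `(a,b,c,d)`-pair: a centrally
symmetric triangulation containing `AplusCore`, all of whose remaining interior
edges join a vertex of `{1,…,l}` to a vertex of `{c̄,…,d̄}` or a vertex of
`{1̄,…,l̄}` to a vertex of `{c,…,d}`, and in which every vertex of `{c̄,…,d̄}` is
joined to at least two vertices of `{1,…,l}` (so combs with at least two teeth
are attached at the vertices `c̄,…,d̄` and their opposites). -/
def IsAplus (a b c d : ℕ) (T : Set (Finset (ZMod (2 * d + 2)))) : Prop :=
  IsCST (2 * d + 2) T ∧ AplusCore a b c d ⊆ T ∧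
  (∀ e ∈ T, ¬ IsBoundaryEdge (2 * d + 2) e → e ∉ AplusCore a b c d →
    ∃ i j : ℕ, 1 ≤ i ∧ i ≤ a + b - d + 2 ∧ c ≤ j ∧ j ≤ d ∧
      (e = ({(i : ZMod (2 * d + 2)), opp (2 * d + 2) (j : ZMod (2 * d + 2))} : Finset (ZMod (2 * d + 2))) ∨
       e = ({opp (2 * d + 2) (i : ZMod (2 * d + 2)), (j : ZMod (2 * d + 2))} : Finset (ZMod (2 * d + 2))))) ∧
  (∀ j : ℕ, c ≤ j → j ≤ d →
    ∃ i₁ i₂ : ℕ, 1 ≤ i₁ ∧ i₁ ≤ a + b - d + 2 ∧ 1 ≤ i₂ ∧ i₂ ≤ a + b - d + 2 ∧ i₁ ≠ i₂ ∧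
      ({(i₁ : ZMod (2 * d + 2)), opp (2 * d + 2) (j : ZMod (2 * d + 2))} : Finset (ZMod (2 * d + 2))) ∈ T ∧
      ({(i₂ : ZMod (2 * d + 2)), opp (2 * d + 2) (j : ZMod (2 * d + 2))} : Finset (ZMod (2 * d + 2))) ∈ T)

/-- `(Am, Ap)` is an `(a,b,c,d)`-pair. -/
def IsABCDPair (a b c d : ℕ) (Am Ap : Set (Finset (ZMod (2 * d + 2)))) : Prop :=
  b < c ∧ c ≤ d ∧ d ≤ a + b ∧ 2 * a + b + 2 < 2 * d ∧
  Am = AminusSet b c d ∧ IsAplus a b c d Ap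

/-- The triangulation `U⁻`: interior edges `{0,0̄}`, `{0,x}` for `2 ≤ x ≤ d`,
and `{0̄,x̄}` for `2 ≤ x ≤ d`. -/
def UminusSet (d : ℕ) : Set (Finset (ZMod (2 * d + 2))) :=
  boundarySet (2 * d + 2) ∪ symCl (2 * d + 2)
    ({({(0 : ZMod (2 * d + 2)), opp (2 * d + 2) 0} : Finset (ZMod (2 * d + 2)))} ∪
     {e | ∃ x : ℕ, 2 ≤ x ∧ x ≤ d ∧
       e = ({(0 : ZMod (2 * d + 2)), (x : ZMod (2 * d + 2))} : Finset (ZMod (2 * d + 2)))})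

/-- The triangulation `U⁺`: interior edges the diagonal `{x,x̄}`, the edges `{0,v}`
for `v ∈ {2,…,x} ∪ {x̄,…,2d}`, and their centrally symmetric copies. -/
def UplusSet (d x : ℕ) : Set (Finset (ZMod (2 * d + 2))) :=
  boundarySet (2 * d + 2) ∪ symCl (2 * d + 2)
    ({({(x : ZMod (2 * d + 2)), opp (2 * d + 2) (x : ZMod (2 * d + 2))} : Finset (ZMod (2 * d + 2)))} ∪
     {e | ∃ v : ℕ, ((2 ≤ v ∧ v ≤ x) ∨ (x + d + 1 ≤ v ∧ v ≤ 2 * d)) ∧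
       e = ({(0 : ZMod (2 * d + 2)), (v : ZMod (2 * d + 2))} : Finset (ZMod (2 * d + 2)))})


section UniqueDiagonalAux

variable {d : ℕ}

private lemma nz (d : ℕ) : NeZero (2 * d + 2) := ⟨by omega⟩

private lemma valc {k : ℕ} (hk : k < 2 * d + 2) : ((k : ℕ) : ZMod (2 * d + 2)).val = k := by
  haveI := nz d
  exact ZMod.val_cast_of_lt hk

private lemma reprv (x y : ZMod (2 * d + 2)) :
    y = x + (((y - x).val : ℕ) : ZMod (2 * d + 2)) := by
  haveI := nz d
  rw [ZMod.natCast_rightInverse (y - x)]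
  ring

private lemma addv (a : ZMod (2 * d + 2)) (k1 k2 : ℕ) :
    a + (k1 : ℕ) + (k2 : ℕ) = a + ((k1 + k2 : ℕ) : ZMod (2 * d + 2)) := by
  push_cast; ring

private lemma wrapv (a : ZMod (2 * d + 2)) (k : ℕ) :
    a + ((k + (2 * d + 2) : ℕ) : ZMod (2 * d + 2)) = a + (k : ℕ) := by
  rw [Nat.cast_add, ZMod.natCast_self, add_zero]

private lemma valA (x : ZMod (2 * d + 2)) {k : ℕ} (hk : k < 2 * d + 2) :
    ((x + (k : ℕ)) - x).val = k := by
  have h : (x + (k : ℕ)) - x = ((k : ℕ) : ZMod (2 * d + 2)) := by ring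
  rw [h, valc hk]

private lemma subv (a : ZMod (2 * d + 2)) {k1 k2 : ℕ} (h : k2 ≤ k1) :
    (a + (k1 : ℕ)) - (a + (k2 : ℕ)) = ((k1 - k2 : ℕ) : ZMod (2 * d + 2)) := by
  rw [Nat.cast_sub h]; ring

private lemma subv' (a : ZMod (2 * d + 2)) {k : ℕ} (h : k ≤ 2 * d + 2) :
    a - (a + (k : ℕ)) = ((2 * d + 2 - k : ℕ) : ZMod (2 * d + 2)) := by
  rw [Nat.cast_sub h, ZMod.natCast_self]; ring

private lemma sbtw_pos {a : ZMod (2 * d + 2)} {α β : ℕ}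
    (h1 : 0 < α) (h2 : α < β) (h3 : β < 2 * d + 2) :
    Sbtw (2 * d + 2) a (a + (α : ℕ)) (a + (β : ℕ)) := by
  have e1 : ((a + (α : ℕ)) - a).val = α := valA a (by omega)
  have e2 : ((a + (β : ℕ)) - a).val = β := valA a h3
  exact ⟨by omega, by omega⟩

private lemma crosses_pos {a : ZMod (2 * d + 2)} {α β γ : ℕ}
    (h1 : 0 < α) (h2 : α < β) (h3 : β < γ) (h4 : γ < 2 * d + 2) :
    Crosses (2 * d + 2) {a, a + (β : ℕ)} {a + (α : ℕ), a + (γ : ℕ)} := by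
  refine ⟨a, a + (β : ℕ), a + (α : ℕ), a + (γ : ℕ), rfl, rfl,
    sbtw_pos h1 h2 (by omega), ?_⟩
  have e1 : ((a + (γ : ℕ)) - (a + (β : ℕ))).val = γ - β := by
    rw [subv a h3.le, valc (by omega)]
  have e2 : (a - (a + (β : ℕ))).val = 2 * d + 2 - β := by
    rw [subv' a (by omega), valc (by omega)]
  exact ⟨by omega, by omega⟩

private lemma pair_eq {x y c e : ZMod (2 * d + 2)}
    (h : ({x, y} : Finset (ZMod (2 * d + 2))) = {c, e}) :
    (x = c ∧ y = e) ∨ (x = e ∧ y = c) := by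
  have hx : x ∈ ({c, e} : Finset (ZMod (2 * d + 2))) := h ▸ (by simp)
  have hy : y ∈ ({c, e} : Finset (ZMod (2 * d + 2))) := h ▸ (by simp)
  have hc : c ∈ ({x, y} : Finset (ZMod (2 * d + 2))) := h ▸ (by simp)
  have he : e ∈ ({x, y} : Finset (ZMod (2 * d + 2))) := h ▸ (by simp)
  simp only [Finset.mem_insert, Finset.mem_singleton] at hx hy hc he
  tauto

private lemma crosses_elim {e f : Finset (ZMod (2 * d + 2))}
    (h : Crosses (2 * d + 2) e f) :
    ∃ (a : ZMod (2 * d + 2)) (α β γ : ℕ), 0 < α ∧ α < β ∧ β < γ ∧ γ < 2 * d + 2 ∧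
      e = {a, a + (β : ℕ)} ∧ f = {a + (α : ℕ), a + (γ : ℕ)} := by
  haveI := nz d
  obtain ⟨a, b, c, dd, he, hf, ⟨h1, h2⟩, ⟨h3, h4⟩⟩ := h
  set α := (c - a).val with hα
  set β := (b - a).val with hβ
  set δ := (dd - b).val with hδ
  have hb : b = a + (β : ℕ) := reprv a b
  have hc : c = a + (α : ℕ) := reprv a c
  have hβn : β < 2 * d + 2 := ZMod.val_lt _
  have hbne : b - a ≠ 0 := by
    intro h0
    rw [hβ, h0, ZMod.val_zero] at h2
    omega
  have hab : (a - b).val = 2 * d + 2 - β := by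
    have h5 : a - b = -(b - a) := by ring
    rw [h5, ZMod.neg_val, if_neg hbne]
  have hdd : dd = a + ((β + δ : ℕ) : ZMod (2 * d + 2)) := by
    have h6 : dd = b + (δ : ℕ) := reprv b dd
    rw [h6, hb, addv]
  rw [hab] at h4
  exact ⟨a, α, β, β + δ, h1, h2, by omega, by omega, by rw [he, hb], by rw [hf, hc, hdd]⟩

private lemma opp_eq (x : ZMod (2 * d + 2)) :
    opp (2 * d + 2) x = x + ((d + 1 : ℕ) : ZMod (2 * d + 2)) := by
  have h : (2 * d + 2) / 2 = d + 1 := by omega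
  rw [opp, h]

private lemma opp_opp (x : ZMod (2 * d + 2)) : opp (2 * d + 2) (opp (2 * d + 2) x) = x := by
  rw [opp_eq, opp_eq, addv]
  have h : (d + 1) + (d + 1) = 0 + (2 * d + 2) := by omega
  rw [h, wrapv]
  simp

private lemma ne_opp (x : ZMod (2 * d + 2)) : x ≠ opp (2 * d + 2) x := by
  rw [opp_eq]
  intro h
  have h0 : ((d + 1 : ℕ) : ZMod (2 * d + 2)) = 0 := (left_eq_add).mp h
  have h1 := congrArg ZMod.val h0
  rw [valc (by omega), ZMod.val_zero] at h1
  omega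

end UniqueDiagonalAux

/-- every centrally symmetric triangulation of a convex polygon with
`2d+2` vertices contains exactly one diagonal, i.e. exactly one edge `{x, x̄}`. -/
theorem unique_diagonal (d : ℕ) (hd : 1 ≤ d)
    (T : Set (Finset (ZMod (2 * d + 2)))) (hT : IsCST (2 * d + 2) T) :
    ∃! e : Finset (ZMod (2 * d + 2)),
      e ∈ T ∧ ∃ x : ZMod (2 * d + 2), e = ({x, opp (2 * d + 2) x} : Finset (ZMod (2 * d + 2))) := by
  haveI := nz d
  obtain ⟨⟨hedge, hnc, hmax⟩, hcs⟩ := hT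
  -- distinct diagonals cross
  have key : ∀ x y : ZMod (2 * d + 2), 0 < (y - x).val → (y - x).val ≤ d →
      Crosses (2 * d + 2) {x, opp (2 * d + 2) x} {y, opp (2 * d + 2) y} := by
    intro x y h1 h2
    set s := (y - x).val with hs
    have hy : y = x + ((s : ℕ) : ZMod (2 * d + 2)) := reprv x y
    rw [opp_eq x, opp_eq y, hy, addv]
    exact crosses_pos h1 (by omega) (by omega) (by omega)
  -- existence of a diagonal
  have exdiag : ∃ x : ZMod (2 * d + 2),
      ({x, opp (2 * d + 2) x} : Finset (ZMod (2 * d + 2))) ∈ T := by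
    by_contra hno
    push_neg at hno
    -- short representation of edges of T
    have hshort : ∀ e ∈ T, ∃ (c : ZMod (2 * d + 2)) (g : ℕ), 1 ≤ g ∧ g ≤ d ∧
        e = {c, c + ((g : ℕ) : ZMod (2 * d + 2))} := by
      intro e he
      obtain ⟨x, y, hxy, rfl⟩ := hedge e he
      set s := (y - x).val with hs
      have hy : y = x + ((s : ℕ) : ZMod (2 * d + 2)) := reprv x y
      have hs0 : s ≠ 0 := by
        intro h0
        apply hxy
        have h1 : y - x = 0 := (ZMod.val_eq_zero _).mp h0
        exact (sub_eq_zero.mp h1).symm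
      have hslt : s < 2 * d + 2 := ZMod.val_lt _
      have hsd : s ≠ d + 1 := by
        intro h0
        apply hno x
        have h1 : y = opp (2 * d + 2) x := by rw [opp_eq, hy, h0]
        rw [← h1]; exact he
      rcases le_or_gt s d with hle | hgt
      · exact ⟨x, s, by omega, hle, by rw [hy]⟩
      · refine ⟨y, 2 * d + 2 - s, by omega, by omega, ?_⟩
        have hx : x = y + ((2 * d + 2 - s : ℕ) : ZMod (2 * d + 2)) := by
          rw [hy, addv]
          have h2 : s + (2 * d + 2 - s) = 0 + (2 * d + 2) := by omega
          rw [h2, wrapv]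
          simp
        rw [Finset.pair_comm, hx]
    -- for each vertex, some edge of T crosses the diagonal at that vertex
    have getf : ∀ x : ZMod (2 * d + 2), ∃ f ∈ T,
        Crosses (2 * d + 2) {x, opp (2 * d + 2) x} f ∨
        Crosses (2 * d + 2) f {x, opp (2 * d + 2) x} := by
      intro x
      by_contra hcon
      push_neg at hcon
      apply hno x
      apply hmax _ ⟨x, opp (2 * d + 2) x, ne_opp x, rfl⟩
      intro f hf
      exact ⟨(hcon f hf).1, (hcon f hf).2⟩
    -- the set of gaps of edges of T
    set G : Set ℕ := {g' | ∃ c : ZMod (2 * d + 2), 1 ≤ g' ∧ g' ≤ d ∧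
      ({c, c + ((g' : ℕ) : ZMod (2 * d + 2))} : Finset (ZMod (2 * d + 2))) ∈ T} with hGdef
    have bdd : BddAbove G := by
      refine ⟨d, ?_⟩
      rintro g' ⟨c, h1, h2, h3⟩
      exact h2
    have Gne : G.Nonempty := by
      obtain ⟨f₀, hf₀T, _⟩ := getf 0
      obtain ⟨c₀, g₀, h1, h2, he⟩ := hshort f₀ hf₀T
      exact ⟨g₀, c₀, h1, h2, he ▸ hf₀T⟩
    obtain ⟨a, hg1, hgd, haT⟩ : ∃ a : ZMod (2 * d + 2), 1 ≤ sSup G ∧ sSup G ≤ d ∧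
        ({a, a + ((sSup G : ℕ) : ZMod (2 * d + 2))} : Finset (ZMod (2 * d + 2))) ∈ T := by
      obtain ⟨c, h1, h2, h3⟩ := Nat.sSup_mem Gne bdd
      exact ⟨c, h1, h2, h3⟩
    set g := sSup G with hgdef
    -- an edge of T crossing the diagonal at a
    obtain ⟨f', hf'T, hcr⟩ := getf a
    rw [opp_eq a] at hcr
    -- normal form for f'
    have hnorm : ∃ s t : ℕ, 1 ≤ s ∧ s ≤ d ∧ 1 ≤ t ∧ t ≤ d ∧
        f' = {a + ((s : ℕ) : ZMod (2 * d + 2)), a + ((d + 1 + t : ℕ) : ZMod (2 * d + 2))} := by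
      rcases hcr with hcr | hcr
      · obtain ⟨b₀, α, β, γ, h1, h2, h3, h4, hD, hf⟩ := crosses_elim hcr
        rcases pair_eq hD with ⟨hb₀, hβ'⟩ | ⟨hβ', hb₀⟩
        · -- b₀ = a, a + (d+1) = b₀ + β
          rw [← hb₀] at hβ' hf
          have hβval : β = d + 1 := by
            have h5 := add_left_cancel hβ'
            have h6 := congrArg ZMod.val h5
            rw [valc (show d + 1 < 2 * d + 2 by omega), valc (by omega)] at h6
            omega
          refine ⟨α, γ - (d + 1), by omega, by omega, by omega, by omega, ?_⟩
          have hγ : d + 1 + (γ - (d + 1)) = γ := by omega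
          rw [hγ]
          exact hf
        · -- a = b₀ + β, b₀ = a + (d+1)
          rw [← hb₀] at hβ' hf
          have hβval : β = d + 1 := by
            have h5 : ((β : ℕ) : ZMod (2 * d + 2)) =
                ((2 * d + 2 - (d + 1) : ℕ) : ZMod (2 * d + 2)) := by
              have h6 : ((β : ℕ) : ZMod (2 * d + 2)) =
                  (a + ((d + 1 : ℕ) : ZMod (2 * d + 2)) + (β : ℕ)) -
                    (a + ((d + 1 : ℕ) : ZMod (2 * d + 2))) := by ring
              rw [h6, ← hβ', subv' a (by omega)]
            have h7 := congrArg ZMod.val h5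
            rw [valc (by omega), valc (by omega)] at h7
            omega
          have hf2 : f' = {a + ((d + 1 + α : ℕ) : ZMod (2 * d + 2)),
              a + ((γ - (d + 1) : ℕ) : ZMod (2 * d + 2))} := by
            rw [hf, addv, addv]
            have h8 : d + 1 + γ = (γ - (d + 1)) + (2 * d + 2) := by omega
            rw [h8, wrapv]
          refine ⟨γ - (d + 1), α, by omega, by omega, by omega, by omega, ?_⟩
          rw [hf2, Finset.pair_comm]
      · obtain ⟨b₀, α, β, γ, h1, h2, h3, h4, hf, hD⟩ := crosses_elim hcr
        rcases pair_eq hD.symm with ⟨hb₀, hβ'⟩ | ⟨hb₀, hβ'⟩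
        · -- b₀ + α = a, b₀ + γ = a + (d+1)
          have hγα : γ - α = d + 1 := by
            have h5 : ((γ - α : ℕ) : ZMod (2 * d + 2)) =
                ((d + 1 : ℕ) : ZMod (2 * d + 2)) := by
              rw [← subv b₀ (by omega : α ≤ γ), hb₀, hβ']
              ring
            have h6 := congrArg ZMod.val h5
            rw [valc (by omega), valc (by omega)] at h6
            omega
          have hb : b₀ = a + ((2 * d + 2 - α : ℕ) : ZMod (2 * d + 2)) := by
            rw [← hb₀, addv]
            have h8 : α + (2 * d + 2 - α) = 0 + (2 * d + 2) := by omega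
            rw [h8, wrapv]
            simp
          have hf2 : f' = {a + ((2 * d + 2 - α : ℕ) : ZMod (2 * d + 2)),
              a + ((β - α : ℕ) : ZMod (2 * d + 2))} := by
            rw [hf, hb, addv]
            have h9 : 2 * d + 2 - α + β = (β - α) + (2 * d + 2) := by omega
            rw [h9, wrapv]
          refine ⟨β - α, d + 1 - α, by omega, by omega, by omega, by omega, ?_⟩
          have h10 : d + 1 + (d + 1 - α) = 2 * d + 2 - α := by omega
          rw [h10, hf2, Finset.pair_comm]
        · -- b₀ + α = a + (d+1), b₀ + γ = a
          have hγα : γ - α = d + 1 := by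
            have h5 : ((γ - α : ℕ) : ZMod (2 * d + 2)) =
                ((2 * d + 2 - (d + 1) : ℕ) : ZMod (2 * d + 2)) := by
              rw [← subv b₀ (by omega : α ≤ γ), hb₀, hβ', subv' a (by omega)]
            have h6 := congrArg ZMod.val h5
            rw [valc (by omega), valc (by omega)] at h6
            omega
          have hαd : α ≤ d := by omega
          have hb : b₀ = a + ((d + 1 - α : ℕ) : ZMod (2 * d + 2)) := by
            have h7 : b₀ + ((α : ℕ) : ZMod (2 * d + 2)) =
                (a + ((d + 1 - α : ℕ) : ZMod (2 * d + 2))) + (α : ℕ) := by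
              rw [addv]
              have h8 : d + 1 - α + α = d + 1 := by omega
              rw [h8]
              exact hb₀
            exact add_right_cancel h7
          have hf2 : f' = {a + ((d + 1 - α : ℕ) : ZMod (2 * d + 2)),
              a + ((d + 1 + (β - α) : ℕ) : ZMod (2 * d + 2))} := by
            rw [hf, hb, addv]
            have h9 : d + 1 - α + β = d + 1 + (β - α) := by omega
            rw [h9]
          exact ⟨d + 1 - α, β - α, by omega, by omega, by omega, by omega, hf2⟩
    obtain ⟨s, t, hs1, hsd, ht1, htd, hf'⟩ := hnorm
    -- produce an edge {c, c + g'} of T with a strictly inside the short arc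
    have hfinal : ∃ (c : ZMod (2 * d + 2)) (g' s'' : ℕ),
        ({c, c + ((g' : ℕ) : ZMod (2 * d + 2))} : Finset (ZMod (2 * d + 2))) ∈ T ∧
        1 ≤ g' ∧ g' ≤ d ∧ 0 < s'' ∧ s'' < g' ∧
        c + ((s'' : ℕ) : ZMod (2 * d + 2)) = a := by
      rcases lt_trichotomy s t with hlt | heq | hgt
      · refine ⟨a + ((d + 1 + t : ℕ) : ZMod (2 * d + 2)), d + 1 + s - t, d + 1 - t,
          ?_, by omega, by omega, by omega, by omega, ?_⟩
        · have hc1 : a + ((d + 1 + t : ℕ) : ZMod (2 * d + 2)) +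
              ((d + 1 + s - t : ℕ) : ZMod (2 * d + 2)) =
              a + ((s : ℕ) : ZMod (2 * d + 2)) := by
            rw [addv]
            have h8 : d + 1 + t + (d + 1 + s - t) = s + (2 * d + 2) := by omega
            rw [h8, wrapv]
          rw [hc1, Finset.pair_comm, ← hf']
          exact hf'T
        · rw [addv]
          have h8 : d + 1 + t + (d + 1 - t) = 0 + (2 * d + 2) := by omega
          rw [h8, wrapv]
          simp
      · exact absurd ((by
          rw [hf', opp_eq, addv]
          have h8 : s + (d + 1) = d + 1 + t := by omega
          rw [h8] : ({a + ((s : ℕ) : ZMod (2 * d + 2)),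
            opp (2 * d + 2) (a + ((s : ℕ) : ZMod (2 * d + 2)))} :
              Finset (ZMod (2 * d + 2))) = f') ▸ hf'T) (hno _)
      · have hsym := hcs _ _ (hf' ▸ hf'T)
        have ho1 : opp (2 * d + 2) (a + ((s : ℕ) : ZMod (2 * d + 2))) =
            a + ((d + 1 + s : ℕ) : ZMod (2 * d + 2)) := by
          rw [opp_eq, addv]
          have h8 : s + (d + 1) = d + 1 + s := by omega
          rw [h8]
        have ho2 : opp (2 * d + 2) (a + ((d + 1 + t : ℕ) : ZMod (2 * d + 2))) =
            a + ((t : ℕ) : ZMod (2 * d + 2)) := by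
          rw [opp_eq, addv]
          have h8 : d + 1 + t + (d + 1) = t + (2 * d + 2) := by omega
          rw [h8, wrapv]
        rw [ho1, ho2] at hsym
        refine ⟨a + ((d + 1 + s : ℕ) : ZMod (2 * d + 2)), d + 1 + t - s, d + 1 - s,
          ?_, by omega, by omega, by omega, by omega, ?_⟩
        · have hc1 : a + ((d + 1 + s : ℕ) : ZMod (2 * d + 2)) +
              ((d + 1 + t - s : ℕ) : ZMod (2 * d + 2)) =
              a + ((t : ℕ) : ZMod (2 * d + 2)) := by
            rw [addv]
            have h8 : d + 1 + s + (d + 1 + t - s) = t + (2 * d + 2) := by omega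
            rw [h8, wrapv]
          rw [hc1]
          exact hsym
        · rw [addv]
          have h8 : d + 1 + s + (d + 1 - s) = 0 + (2 * d + 2) := by omega
          rw [h8, wrapv]
          simp
    obtain ⟨c, g', s'', hmem, hg'1, hg'd, hs''1, hs''g, hca⟩ := hfinal
    have hg'g : g' ≤ g := le_csSup bdd ⟨c, hg'1, hg'd, hmem⟩
    have hcross : Crosses (2 * d + 2) {c, c + ((g' : ℕ) : ZMod (2 * d + 2))}
        {a, a + ((g : ℕ) : ZMod (2 * d + 2))} := by
      have h2 : c + ((s'' + g : ℕ) : ZMod (2 * d + 2)) =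
          a + ((g : ℕ) : ZMod (2 * d + 2)) := by
        rw [← hca, addv]
      have h3 := crosses_pos (a := c) (α := s'') (β := g') (γ := s'' + g)
        hs''1 hs''g (by omega) (by omega)
      rw [hca, h2] at h3
      exact h3
    exact hnc _ hmem _ haT hcross
  -- uniqueness
  obtain ⟨x₀, hx₀⟩ := exdiag
  refine ⟨{x₀, opp (2 * d + 2) x₀}, ⟨hx₀, x₀, rfl⟩, ?_⟩
  rintro e ⟨heT, y, rfl⟩
  set s := (y - x₀).val with hs
  have hy : y = x₀ + ((s : ℕ) : ZMod (2 * d + 2)) := reprv x₀ y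
  have hslt : s < 2 * d + 2 := ZMod.val_lt _
  rcases Nat.eq_zero_or_pos s with h0 | hpos
  · have hyx : y = x₀ := by
      rw [hy, h0]
      simp
    rw [hyx]
  rcases eq_or_ne s (d + 1) with hdg | hne
  · have hyx : y = opp (2 * d + 2) x₀ := by rw [opp_eq, hy, hdg]
    rw [hyx, opp_opp, Finset.pair_comm]
  exfalso
  rcases le_or_gt s d with hle | hgt
  · exact hnc _ hx₀ _ heT (key x₀ y hpos hle)
  · have hoy : opp (2 * d + 2) y = x₀ + ((s - (d + 1) : ℕ) : ZMod (2 * d + 2)) := by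
      rw [opp_eq, hy, addv]
      have h8 : s + (d + 1) = (s - (d + 1)) + (2 * d + 2) := by omega
      rw [h8, wrapv]
    have hval : (opp (2 * d + 2) y - x₀).val = s - (d + 1) := by
      rw [hoy, valA x₀ (by omega)]
    have hkey := key x₀ (opp (2 * d + 2) y) (by omega) (by omega)
    rw [opp_opp, Finset.pair_comm (opp (2 * d + 2) y) y] at hkey
    exact hnc _ hx₀ _ heT hkey

end Cyclo
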